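/- Let Θ ∈ ℂ^{N×N} be unitary and symmetric (Θ = Θᵀ) with −1 not an eigenvalue of Θ. Then B := (1/(i·Z₀))·(I + Θ)⁻¹(I − Θ) is a real symmetric matrix, i.e., every unitary symmetric matrix avoiding eigenvalue −1 arises as the scattering matrix of a lossless reciprocal network. -/

import Mathlib

open Matrix

private lemma inv_comm' {N : ℕ} (A B : Matrix (Fin N) (Fin N) ℂ)
    (h : A * B = B * A) (hA : IsUnit A.det) : A⁻¹ * B = B * A⁻¹ := by
  have h1 : A⁻¹ * (B * A) * A⁻¹ = A⁻¹ * (A * B) * A⁻¹ := by rw [h]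
  calc A⁻¹ * B = A⁻¹ * B * (A * A⁻¹) := by rw [Matrix.mul_nonsing_inv A hA, mul_one]
    _ = A⁻¹ * (B * A) * A⁻¹ := by simp [mul_assoc]
    _ = A⁻¹ * (A * B) * A⁻¹ := h1
    _ = (A⁻¹ * A) * (B * A⁻¹) := by simp [mul_assoc]
    _ = B * A⁻¹ := by rw [Matrix.nonsing_inv_mul A hA, one_mul]

theorem inverse_cayley_real_symmetric
    (N : ℕ) (Θ : Matrix (Fin N) (Fin N) ℂ)
    (hunit : Θᴴ * Θ = 1) (hsym : Θ = Θᵀ)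
    (hne : IsUnit (1 + Θ).det)
    (Z0 : ℝ) (hZ0 : 0 < Z0) :
    (∀ i j, (((1 / (Complex.I * (Z0 : ℂ))) • ((1 + Θ)⁻¹ * (1 - Θ))) i j).im = 0) ∧
      ((1 / (Complex.I * (Z0 : ℂ))) • ((1 + Θ)⁻¹ * (1 - Θ))) =
        ((1 / (Complex.I * (Z0 : ℂ))) • ((1 + Θ)⁻¹ * (1 - Θ)))ᵀ := by
  set M : Matrix (Fin N) (Fin N) ℂ := (1 + Θ)⁻¹ * (1 - Θ) with hM
  have hdet : IsUnit Θ.det := by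
    have h : Θᴴ.det * Θ.det = 1 := by rw [← Matrix.det_mul, hunit, Matrix.det_one]
    exact IsUnit.of_mul_eq_one _ (by rw [mul_comm]; exact h)
  have hinv : Θ⁻¹ = Θᴴ := Matrix.inv_eq_left_inv hunit
  -- commutation facts
  have hc1 : (1 + Θ) * (1 - Θ) = (1 - Θ) * (1 + Θ) := by noncomm_ring
  have hc2 : (1 + Θ)⁻¹ * (1 - Θ) = (1 - Θ) * (1 + Θ)⁻¹ := inv_comm' _ _ hc1 hne
  have hcΘ : (1 + Θ)⁻¹ * Θ = Θ * (1 + Θ)⁻¹ := by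
    apply inv_comm' _ _ _ hne; noncomm_ring
  -- symmetry
  have hMsym : Mᵀ = M := by
    rw [hM, Matrix.transpose_mul, Matrix.transpose_nonsing_inv, Matrix.transpose_add,
      Matrix.transpose_sub, Matrix.transpose_one, ← hsym, hc2]
  -- conjugate transpose : Mᴴ = -M
  have hΘΘ : Θ⁻¹ * Θ = 1 := Matrix.nonsing_inv_mul Θ hdet
  have h1 : 1 - Θ⁻¹ = Θ⁻¹ * (Θ - 1) := by rw [mul_sub, hΘΘ, mul_one]
  have h2 : 1 + Θ⁻¹ = Θ⁻¹ * (1 + Θ) := by rw [mul_add, hΘΘ, mul_one, add_comm]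
  have hMH : Mᴴ = -M := by
    have hc3 : (1 + Θ)⁻¹ * (Θ - 1) = (Θ - 1) * (1 + Θ)⁻¹ :=
      inv_comm' _ _ (by noncomm_ring) hne
    rw [hM, Matrix.conjTranspose_mul, Matrix.conjTranspose_nonsing_inv,
      Matrix.conjTranspose_add, Matrix.conjTranspose_sub, Matrix.conjTranspose_one,
      ← hinv, h1, h2, Matrix.mul_inv_rev, Matrix.nonsing_inv_nonsing_inv Θ hdet]
    calc Θ⁻¹ * (Θ - 1) * ((1 + Θ)⁻¹ * Θ)
        = Θ⁻¹ * ((Θ - 1) * (1 + Θ)⁻¹) * Θ := by simp [mul_assoc]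
      _ = Θ⁻¹ * ((1 + Θ)⁻¹ * (Θ - 1)) * Θ := by rw [hc3]
      _ = Θ⁻¹ * (1 + Θ)⁻¹ * ((Θ - 1) * Θ) := by simp [mul_assoc]
      _ = Θ⁻¹ * (1 + Θ)⁻¹ * (Θ * (Θ - 1)) := by noncomm_ring
      _ = Θ⁻¹ * ((1 + Θ)⁻¹ * Θ) * (Θ - 1) := by simp [mul_assoc]
      _ = Θ⁻¹ * (Θ * (1 + Θ)⁻¹) * (Θ - 1) := by rw [hcΘ]
      _ = (Θ⁻¹ * Θ) * ((1 + Θ)⁻¹ * (Θ - 1)) := by simp [mul_assoc]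
      _ = (1 + Θ)⁻¹ * (Θ - 1) := by rw [hΘΘ, one_mul]
      _ = -M := by rw [hM]; noncomm_ring
  -- entries : conj (M i j) = - M i j
  have hconj : ∀ i j, (starRingEnd ℂ) (M i j) = - M i j := by
    intro i j
    have := congrFun (congrFun hMH j) i
    simp only [Matrix.conjTranspose_apply, Matrix.neg_apply] at this
    have hji : M j i = M i j := by
      have := congrFun (congrFun hMsym i) j
      simpa [Matrix.transpose_apply] using this
    rw [hji] at this
    exact this
  constructor
  · intro i j
    rw [← Complex.conj_eq_iff_im]
    simp only [Matrix.smul_apply, smul_eq_mul]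
    rw [_root_.map_mul, hconj i j]
    have hc : (starRingEnd ℂ) (1 / (Complex.I * (Z0 : ℂ))) = -(1 / (Complex.I * (Z0 : ℂ))) := by
      rw [map_div₀, _root_.map_mul, Complex.conj_I, Complex.conj_ofReal, _root_.map_one]
      ring
    rw [hc]; ring
  · rw [Matrix.transpose_smul, hMsym]
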